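/- The number of runs in a trie with n edges is less than n. -/

import Mathlib

/-- A trie with `n` edges: nodes are `0, …, n` with root `0`; every non-root node `v`
has a parent `parent v < v`, and the edge from `v` to its parent is labeled `label v`.
Edges from a node to its distinct children have distinct labels. -/
structure Trie (α : Type*) where
  n : ℕ
  parent : Fin (n + 1) → Fin (n + 1)
  label : Fin (n + 1) → α
  root_fixed : parent 0 = 0
  parent_lt : ∀ v : Fin (n + 1), v ≠ 0 → parent v < v
  labels_distinct : ∀ u v : Fin (n + 1), u ≠ 0 → v ≠ 0 →
    parent u = parent v → label u = label v → u = v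

/-- `strUp T k u` is the string of edge labels read along the path of length `k`
from `u` towards the root, i.e. `str(u, parentᵏ u)`. -/
def strUp {α : Type*} (T : Trie α) : ℕ → Fin (T.n + 1) → List α
  | 0, _ => []
  | k + 1, u => T.label u :: strUp T k (T.parent u)

/-- `p` is a period of `w`: `w[i] = w[i+p]` whenever both positions are valid. -/
def HasPeriod {α : Type*} (w : List α) (p : ℕ) : Prop :=
  ∀ i, i + p < w.length → w[i]? = w[i + p]?

/-- `(v, k)` is a run of the trie `T` with (smallest) period `p`: the path of length
`k` from `v` towards the root is a genuine path (not passing beyond the root), `p` is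
the smallest period of its label string, the exponent is at least `2`, and the
periodicity extends neither towards the root (the auxiliary parent `⊥` of the root
carries a distinct label) nor towards the leaves (to any child of `v`). -/
def TrieRun {α : Type*} (T : Trie α) (v : Fin (T.n + 1)) (k p : ℕ) : Prop :=
  0 < p ∧ 2 * p ≤ k ∧ (∀ m, m < k → (T.parent)^[m] v ≠ 0) ∧
  HasPeriod (strUp T k v) p ∧
  (∀ q, 0 < q → q < p → ¬ HasPeriod (strUp T k v) q) ∧
  ((T.parent)^[k] v = 0 ∨ ¬ HasPeriod (strUp T (k + 1) v) p) ∧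
  (∀ u : Fin (T.n + 1), u ≠ 0 → T.parent u = v → ¬ HasPeriod (strUp T (k + 1) u) p)


namespace Stmt11Aux

variable {α : Type*}

/-- Lexicographic strict comparison of the length-`p` windows of `z`, `z'`. -/
def LexLtF (lt : α → α → Prop) (p : ℕ) (z z' : ℕ → α) : Prop :=
  ∃ m, m < p ∧ (∀ i, i < m → z i = z' i) ∧ lt (z m) (z' m)

/-- `z[0..p-1]` is a Lyndon word w.r.t. `lt`. -/
def IsLynF (lt : α → α → Prop) (p : ℕ) (z : ℕ → α) : Prop :=
  ∀ q, 0 < q → q < p → ∃ m, q + m < p ∧ (∀ i, i < m → z i = z (q + i)) ∧ lt (z m) (z (q + m))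

section Order

variable {lt : α → α → Prop}

theorem lt_asymm' (hirr : ∀ a : α, ¬ lt a a) (htr : ∀ a b c : α, lt a b → lt b c → lt a c)
    (a b : α) (h1 : lt a b) (h2 : lt b a) : False :=
  hirr a (htr a b a h1 h2)

theorem lt_ne' (hirr : ∀ a : α, ¬ lt a a) (a b : α) (h : lt a b) : a ≠ b :=
  fun e => hirr a (e ▸ h)

theorem lex_irrefl (hirr : ∀ a : α, ¬ lt a a) (p : ℕ) (z : ℕ → α) : ¬ LexLtF lt p z z := by
  rintro ⟨m, -, -, h⟩; exact hirr _ h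

theorem lex_trichotomy (htot : ∀ a b : α, a ≠ b → lt a b ∨ lt b a) (p : ℕ) (z z' : ℕ → α) :
    (∀ m, m < p → z m = z' m) ∨ LexLtF lt p z z' ∨ LexLtF lt p z' z := by
  classical
  by_cases h : ∀ m, m < p → z m = z' m
  · exact Or.inl h
  · push_neg at h
    have hex : ∃ m, m < p ∧ z m ≠ z' m := h
    obtain ⟨hlt, hne⟩ := Nat.find_spec hex
    have hpref : ∀ i, i < Nat.find hex → z i = z' i := by
      intro i hi
      by_contra hneq
      exact absurd ⟨lt_trans hi hlt, hneq⟩ (Nat.find_min hex hi)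
    rcases htot _ _ hne with h1 | h1
    · exact Or.inr (Or.inl ⟨Nat.find hex, hlt, hpref, h1⟩)
    · exact Or.inr (Or.inr ⟨Nat.find hex, hlt, fun i hi => (hpref i hi).symm, h1⟩)

theorem lex_asymm (hirr : ∀ a : α, ¬ lt a a) (htr : ∀ a b c : α, lt a b → lt b c → lt a c)
    (p : ℕ) (z z' : ℕ → α)
    (h1 : LexLtF lt p z z') (h2 : LexLtF lt p z' z) : False := by
  obtain ⟨m, hm, pre, hl⟩ := h1
  obtain ⟨m', hm', pre', hl'⟩ := h2
  rcases Nat.lt_trichotomy m m' with h | h | h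
  · exact lt_ne' hirr _ _ hl (pre' m h).symm
  · subst h; exact lt_asymm' hirr htr _ _ hl hl'
  · exact lt_ne' hirr _ _ hl' (pre m' h).symm

theorem lex_trans (htr : ∀ a b c : α, lt a b → lt b c → lt a c) (p : ℕ) (z₁ z₂ z₃ : ℕ → α)
    (h1 : LexLtF lt p z₁ z₂) (h2 : LexLtF lt p z₂ z₃) : LexLtF lt p z₁ z₃ := by
  obtain ⟨m, hm, pre, hl⟩ := h1
  obtain ⟨m', hm', pre', hl'⟩ := h2
  rcases Nat.lt_trichotomy m m' with h | h | h
  · exact ⟨m, hm, fun i hi => (pre i hi).trans (pre' i (hi.trans h)),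
      (pre' m h) ▸ hl⟩
  · subst h
    exact ⟨m, hm, fun i hi => (pre i hi).trans (pre' i hi), htr _ _ _ hl hl'⟩
  · exact ⟨m', hm', fun i hi => (pre i (hi.trans h)).trans (pre' i hi),
      (pre m' h).symm ▸ hl'⟩

theorem exists_min (hirr : ∀ a : α, ¬ lt a a) (htr : ∀ a b c : α, lt a b → lt b c → lt a c)
    (p : ℕ) (f : ℕ → ℕ → α) :
    ∀ N : ℕ, 0 < N → ∃ j, j < N ∧ ∀ i, i < N → ¬ LexLtF lt p (f i) (f j) := by
  intro N
  induction N with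
  | zero => intro h; omega
  | succ N ih =>
    intro _
    rcases Nat.eq_zero_or_pos N with h0 | hpos
    · subst h0
      refine ⟨0, Nat.zero_lt_one, ?_⟩
      intro i hi
      interval_cases i
      exact lex_irrefl hirr p (f 0)
    · obtain ⟨j, hj, hmin⟩ := ih hpos
      by_cases hN : LexLtF lt p (f N) (f j)
      · refine ⟨N, Nat.lt_succ_self N, ?_⟩
        intro i hi
        rcases Nat.lt_succ_iff_lt_or_eq.mp hi with h | h
        · intro hcon
          exact hmin i h (lex_trans htr p _ _ _ hcon hN)
        · subst h; exact lex_irrefl hirr p (f i)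
      · refine ⟨j, hj.trans (Nat.lt_succ_self N), ?_⟩
        intro i hi
        rcases Nat.lt_succ_iff_lt_or_eq.mp hi with h | h
        · exact hmin i h
        · subst h; exact hN

theorem isLynF_congr (p : ℕ) (z z' : ℕ → α) (h : ∀ m, m < p → z m = z' m)
    (hz : IsLynF lt p z) : IsLynF lt p z' := by
  intro q hq0 hqp
  obtain ⟨m, hm, pre, hl⟩ := hz q hq0 hqp
  refine ⟨m, hm, ?_, ?_⟩
  · intro i hi
    rw [← h i (by omega), ← h (q+i) (by omega)]
    exact pre i hi
  · rw [← h m (by omega), ← h (q+m) (by omega)]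
    exact hl

/-- Key pure word-combinatorics lemma: a string of length `k ≥ 2p` with smallest
period `p` has a Lyndon-rotation occurrence of its root starting at some position
`t ∈ [1, p]`. -/
theorem exists_lyndon_rot (hirr : ∀ a : α, ¬ lt a a)
    (htr : ∀ a b c : α, lt a b → lt b c → lt a c)
    (htot : ∀ a b : α, a ≠ b → lt a b ∨ lt b a)
    (W : ℕ → α) (p k : ℕ) (hp : 0 < p) (h2 : 2 * p ≤ k)
    (per : ∀ i, i + p < k → W i = W (i + p))
    (minper : ∀ q, 0 < q → q < p → ∃ i, i + q < k ∧ W i ≠ W (i + q)) :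
    ∃ t, 1 ≤ t ∧ t ≤ p ∧ IsLynF lt p (fun m => W (t + m)) := by
  classical
  set r : ℕ → ℕ → α := fun j m => W (1 + (j + m) % p) with hr
  have r0_add_p : ∀ a, r 0 (a + p) = r 0 a := by
    intro a; simp only [hr, Nat.zero_add, Nat.add_mod_right]
  have r_eq : ∀ j m, r j m = r 0 (j + m) := by
    intro j m; simp only [hr, Nat.zero_add]
  have r0_add_mul : ∀ a t, r 0 (a + p * t) = r 0 a := by
    intro a t
    induction t with
    | zero => rfl
    | succ t ih => rw [Nat.mul_succ, ← Nat.add_assoc, r0_add_p, ih]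
  -- representation of W in terms of r 0
  have W_rep : ∀ m, 1 ≤ m → m < k → W m = r 0 (m - 1) := by
    intro m
    induction m using Nat.strong_induction_on with
    | _ m ih =>
      intro h1 hk
      rcases le_or_gt m p with hmp | hmp
      · have : (m - 1) % p = m - 1 := Nat.mod_eq_of_lt (by omega)
        simp only [hr, Nat.zero_add, this]
        congr 1; omega
      · have hper : W (m - p) = W m := by
          have := per (m - p) (by omega)
          rw [Nat.sub_add_cancel (by omega)] at this
          exact this
        rw [← hper, ih (m - p) (by omega) (by omega) (by omega)]
        have : m - 1 = (m - p - 1) + p := by omega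
        rw [this, r0_add_p]
  -- aperiodicity of the rotation family
  have haper0 : ∀ q, 0 < q → q < p → ¬ (∀ m, r 0 (m + q) = r 0 m) := by
    intro q hq0 hqp hfix
    have hWq : ∀ i, i + q < k → W i = W (i + q) := by
      intro i hik
      rcases Nat.eq_zero_or_pos i with h0 | h1
      · subst h0
        have hWp : W 0 = W p := by have := per 0 (by omega); simpa using this
        rw [hWp, W_rep p (by omega) (by omega), W_rep (0 + q) (by omega) (by omega)]
        have e1 : p - 1 + q = (q - 1) + p := by omega
        have h3 := hfix (p - 1)
        rw [e1, r0_add_p] at h3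
        rw [← h3]
        congr 1; omega
      · rw [W_rep i h1 (by omega), W_rep (i + q) (by omega) hik]
        have : i + q - 1 = (i - 1) + q := by omega
        rw [this, hfix]
    obtain ⟨i, hik, hne⟩ := minper q hq0 hqp
    exact hne (hWq i hik)
  have haperJ : ∀ j q, 0 < q → q < p → ¬ (∀ m, r j (m + q) = r j m) := by
    intro j q hq0 hqp hfix
    apply haper0 q hq0 hqp
    intro a
    have hjle : j ≤ p * j := Nat.le_mul_of_pos_left j hp
    have e1 : j + (a + p * j - j + q) = a + q + p * j := by omega
    have e2 : j + (a + p * j - j) = a + p * j := by omega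
    have hfx : r 0 (a + q + p * j) = r 0 (a + p * j) := by
      have hfx0 : r 0 (j + (a + p * j - j + q)) = r 0 (j + (a + p * j - j)) := by
        rw [← r_eq, ← r_eq]; exact hfix _
      rw [e1, e2] at hfx0
      exact hfx0
    calc r 0 (a + q) = r 0 (a + q + p * j) := (r0_add_mul _ j).symm
      _ = r 0 (a + p * j) := hfx
      _ = r 0 a := r0_add_mul _ j
  -- pick the minimal rotation
  obtain ⟨j₀, hj₀, hmin⟩ := exists_min hirr htr p r p hp
  set z : ℕ → α := r j₀ with hz
  have hz_p : ∀ a, z (a + p) = z a := by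
    intro a; simp only [hz, hr, ← Nat.add_assoc, Nat.add_mod_right]
  have hz_mod : ∀ a, z a = z (a % p) := by
    intro a
    simp only [hz, hr]
    congr 2
    conv_rhs => rw [Nat.add_mod_mod]
  have hzshift : ∀ q m, z (q + m) = r ((j₀ + q) % p) m := by
    intro q m
    simp only [hz, hr]
    congr 2
    rw [Nat.mod_add_mod]
    congr 1
    omega
  have hlynz : IsLynF lt p z := by
    intro q hq0 hqp
    set j₁ := (j₀ + q) % p with hj₁def
    have hj₁ : j₁ < p := Nat.mod_lt _ hp
    rcases lex_trichotomy htot p z (r j₁) with heq | hlt | hgt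
    · exfalso
      apply haperJ j₀ q hq0 hqp
      intro m
      calc r j₀ (m + q) = z (m + q) := rfl
        _ = z ((m + q) % p) := hz_mod _
        _ = z ((m % p + q) % p) := by rw [Nat.mod_add_mod]
        _ = z (m % p + q) := (hz_mod _).symm
        _ = z (q + m % p) := by rw [Nat.add_comm]
        _ = r j₁ (m % p) := hzshift q (m % p)
        _ = z (m % p) := (heq _ (Nat.mod_lt _ hp)).symm
        _ = z m := (hz_mod m).symm
    · obtain ⟨mh, hmh, hpref, hlt1⟩ := hlt
      have hlt1' : lt (z mh) (z (q + mh)) := by rw [hzshift q mh]; exact hlt1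
      rcases lt_or_ge (q + mh) p with hcase | hcase
      · refine ⟨mh, hcase, ?_, hlt1'⟩
        intro i hi
        rw [hzshift q i]
        exact hpref i hi
      · exfalso
        set j₂ := (j₀ + (p - q)) % p with hj₂def
        have hj₂ : j₂ < p := Nat.mod_lt _ hp
        have hz2 : ∀ m, z ((p - q) + m) = r j₂ m := fun m => hzshift (p - q) m
        set d := mh - (p - q) with hd
        have hdm : (p - q) + d = mh := by omega
        apply hmin j₂ hj₂
        refine ⟨d, by omega, ?_, ?_⟩
        · intro i hi
          rw [← hz2 i]
          have h1 : z ((p - q) + i) = z (q + ((p - q) + i)) := by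
            rw [hzshift q ((p-q)+i)]
            exact hpref _ (by omega)
          have e1 : q + ((p - q) + i) = i + p := by omega
          rw [h1, e1, hz_p]
        · rw [← hz2 d, hdm]
          have e1 : q + mh = d + p := by omega
          have h2 : z (q + mh) = z d := by rw [e1, hz_p]
          rw [← h2]
          exact hlt1'
    · exact absurd hgt (hmin j₁ hj₁)
  -- transfer to W
  refine ⟨1 + j₀, by omega, by omega, ?_⟩
  apply isLynF_congr p z _ _ hlynz
  intro m hm
  simp only [hz, hr]
  rcases lt_or_ge (j₀ + m) p with hc | hc
  · rw [Nat.mod_eq_of_lt hc]; congr 1; omega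
  · have e1 : (j₀ + m) % p = j₀ + m - p := by
      rw [Nat.mod_eq_sub_mod hc, Nat.mod_eq_of_lt (by omega)]
    rw [e1]
    have h3 := per (1 + (j₀ + m - p)) (by omega)
    have e2 : 1 + j₀ + m = 1 + (j₀ + m - p) + p := by omega
    rw [e2]
    exact h3

end Order

end Stmt11Aux

namespace Stmt11Aux

open Function

variable {α : Type*}

/-- A pair of mutually reverse strict orders indexed by a `Bool`. -/
def ltB (lt0 : α → α → Prop) : Bool → α → α → Prop :=
  fun b x y => if b then lt0 x y else lt0 y x

section LtB

variable {lt0 : α → α → Prop}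

theorem ltB_irr (hirr : ∀ a : α, ¬ lt0 a a) (b : Bool) : ∀ a : α, ¬ ltB lt0 b a a := by
  intro a; cases b <;> simpa [ltB] using hirr a

theorem ltB_trans (htr : ∀ a b c : α, lt0 a b → lt0 b c → lt0 a c) (b : Bool) :
    ∀ x y w : α, ltB lt0 b x y → ltB lt0 b y w → ltB lt0 b x w := by
  intro x y w
  cases b <;> simp only [ltB, if_true, if_false]
  · exact fun h1 h2 => htr _ _ _ h2 h1
  · exact fun h1 h2 => htr _ _ _ h1 h2

theorem ltB_total (htot : ∀ a b : α, a ≠ b → lt0 a b ∨ lt0 b a) (b : Bool) :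
    ∀ x y : α, x ≠ y → ltB lt0 b x y ∨ ltB lt0 b y x := by
  intro x y hne
  cases b <;> simp only [ltB, if_true, if_false]
  · exact (htot x y hne).symm
  · exact htot x y hne

theorem ltB_flip {b b' : Bool} (hbb : b ≠ b') (x y : α) (h : ltB lt0 b x y) :
    ltB lt0 b' y x := by
  cases b <;> cases b' <;> simp_all [ltB]

end LtB

end Stmt11Aux

namespace Stmt11Aux

open Function

variable {α : Type*}

theorem strUp_length (T : Trie α) (k : ℕ) : ∀ v, (strUp T k v).length = k := by
  induction k with
  | zero => intro v; rfl
  | succ k ih => intro v; simp [strUp, ih]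

theorem strUp_get? (T : Trie α) (k : ℕ) :
    ∀ (v : Fin (T.n + 1)) (i : ℕ), i < k →
      (strUp T k v)[i]? = some (T.label ((T.parent)^[i] v)) := by
  induction k with
  | zero => intro v i h; omega
  | succ k ih =>
    intro v i h
    cases i with
    | zero => simp [strUp]
    | succ i =>
      show (strUp T k (T.parent v))[i]? = _
      rw [ih (T.parent v) i (by omega), Function.iterate_succ_apply]

theorem hasPeriod_strUp_iff (T : Trie α) (k p : ℕ) (v : Fin (T.n + 1)) :
    HasPeriod (strUp T k v) p ↔
      ∀ i, i + p < k → T.label ((T.parent)^[i] v) = T.label ((T.parent)^[i + p] v) := by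
  unfold HasPeriod
  rw [strUp_length]
  constructor
  · intro h i hi
    have h2 := h i hi
    rw [strUp_get? T k v i (by omega), strUp_get? T k v (i + p) hi] at h2
    exact Option.some.inj h2
  · intro h i hi
    rw [strUp_get? T k v i (by omega), strUp_get? T k v (i + p) hi, h i hi]

/-- Data derived from a run: smallest period `p`, a direction `b`, and a position
`t ∈ [1, p]` where a Lyndon rotation of the root occurs. -/
structure RunData (lt0 : α → α → Prop) (T : Trie α) (v : Fin (T.n + 1)) (k : ℕ) where
  p : ℕ
  t : ℕ
  b : Bool
  hp : 0 < p
  h2p : 2 * p ≤ k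
  ht1 : 1 ≤ t
  htp : t ≤ p
  hnz : ∀ m, m < k → (T.parent)^[m] v ≠ 0
  hper : ∀ i, i + p < k → T.label ((T.parent)^[i] v) = T.label ((T.parent)^[i + p] v)
  htop : (T.parent)^[k] v = 0 ∨
    ltB lt0 b (T.label ((T.parent)^[k] v)) (T.label ((T.parent)^[k - p] v))
  hlyn : IsLynF (ltB lt0 b) p (fun m => T.label ((T.parent)^[t + m] v))
  hnochild : ∀ u : Fin (T.n + 1), u ≠ 0 → T.parent u = v →
    T.label u ≠ T.label ((T.parent)^[p - 1] v)

theorem exists_runData {lt0 : α → α → Prop}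
    (hirr : ∀ a : α, ¬ lt0 a a)
    (htr : ∀ a b c : α, lt0 a b → lt0 b c → lt0 a c)
    (htot : ∀ a b : α, a ≠ b → lt0 a b ∨ lt0 b a)
    {T : Trie α} {v : Fin (T.n + 1)} {k : ℕ}
    (h : ∃ p, TrieRun T v k p) : Nonempty (RunData lt0 T v k) := by
  classical
  obtain ⟨p, hp0, h2p, hnz, hper0, hmin0, htop0, hchild0⟩ := h
  have hper : ∀ i, i + p < k →
      T.label ((T.parent)^[i] v) = T.label ((T.parent)^[i + p] v) := by
    rw [hasPeriod_strUp_iff] at hper0; exact hper0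
  have hminper : ∀ q, 0 < q → q < p → ∃ i, i + q < k ∧
      T.label ((T.parent)^[i] v) ≠ T.label ((T.parent)^[i + q] v) := by
    intro q h1 h2
    have h3 := hmin0 q h1 h2
    rw [hasPeriod_strUp_iff] at h3
    push_neg at h3
    exact h3
  have hbex : ∃ b : Bool, (T.parent)^[k] v = 0 ∨
      ltB lt0 b (T.label ((T.parent)^[k] v)) (T.label ((T.parent)^[k - p] v)) := by
    by_cases h0 : (T.parent)^[k] v = 0
    · exact ⟨true, Or.inl h0⟩
    · have hne : T.label ((T.parent)^[k] v) ≠ T.label ((T.parent)^[k - p] v) := by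
        rcases htop0 with h0' | hnp
        · exact absurd h0' h0
        · intro heq
          apply hnp
          rw [hasPeriod_strUp_iff]
          intro i hi
          rcases lt_or_ge (i + p) k with hik | hik
          · exact hper i hik
          · have hieq : i = k - p := by omega
            subst hieq
            have e : k - p + p = k := by omega
            rw [e]
            exact heq.symm
      rcases htot _ _ hne with h1 | h1
      · exact ⟨true, Or.inr (by simpa [ltB] using h1)⟩
      · exact ⟨false, Or.inr (by simpa [ltB] using h1)⟩
  obtain ⟨b, hb⟩ := hbex
  obtain ⟨t, ht1, htp, hlyn⟩ := exists_lyndon_rot (ltB_irr hirr b) (ltB_trans htr b)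
    (ltB_total htot b) (fun m => T.label ((T.parent)^[m] v)) p k hp0 h2p hper hminper
  refine ⟨⟨p, t, b, hp0, h2p, ht1, htp, hnz, hper, hb, hlyn, ?_⟩⟩
  intro u hu hpar heq
  apply hchild0 u hu hpar
  rw [hasPeriod_strUp_iff]
  intro i hi
  cases i with
  | zero =>
    simp only [Function.iterate_zero_apply, Nat.zero_add]
    have e : p = (p - 1) + 1 := by omega
    rw [e, Function.iterate_succ_apply, hpar]
    exact heq
  | succ i =>
    have e1 : (T.parent)^[i + 1] u = (T.parent)^[i] v := by
      rw [Function.iterate_succ_apply, hpar]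
    have e2 : (T.parent)^[i + 1 + p] u = (T.parent)^[i + p] v := by
      have e : i + 1 + p = (i + p) + 1 := by omega
      rw [e, Function.iterate_succ_apply, hpar]
    rw [e1, e2]
    exact hper i (by omega)

end Stmt11Aux

namespace Stmt11Aux

open Function

variable {α : Type*}

/-- Two runs whose Lyndon-root occurrences start at the parent of a common node,
with distinct periods `p < p'`, are impossible. -/
theorem master {lt0 : α → α → Prop}
    (hirr : ∀ a : α, ¬ lt0 a a)
    (htr : ∀ a b c : α, lt0 a b → lt0 b c → lt0 a c)
    (z : ℕ → α) (p p' J J' : ℕ) (b b' : Bool)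
    (hp : 0 < p) (hpp' : p < p')
    (hJ : p ≤ J + 1) (hJ' : p' ≤ J' + 1)
    (perz : ∀ i, i + p ≤ J → z i = z (i + p))
    (top : J + 1 ≤ J' → ltB lt0 b (z (J + 1)) (z (J + 1 - p)))
    (lyn : IsLynF (ltB lt0 b) p z) (lyn' : IsLynF (ltB lt0 b') p' z)
    (hc : z (p - 1) = z (p' - 1)) : False := by
  have hirrB : ∀ (c : Bool) (a : α), ¬ ltB lt0 c a a := fun c => ltB_irr hirr c
  rcases Nat.lt_or_ge p 2 with hp1 | hp2
  · -- p = 1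
    obtain ⟨m, hm, pre, hl⟩ := lyn' (p' - 1) (by omega) (by omega)
    have hm0 : m = 0 := by omega
    subst hm0
    rw [Nat.add_zero] at hl
    have hzz : z 0 = z (p' - 1) := by
      rw [← hc]; congr 1; omega
    rw [← hzz] at hl
    exact hirrB b' _ hl
  · by_cases hbb : b = b'
    · -- same order, so the smaller root's period contradicts Lyndon-ness of root'
      obtain ⟨m, hm, pre, hl⟩ := lyn' p hp (by omega)
      rw [← hbb] at hl
      rcases le_or_gt (p + m) J with hcs | hcs
      · have hper := perz m (by omega)
        have e : m + p = p + m := by omega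
        rw [e] at hper
        rw [← hper] at hl
        exact hirrB b _ hl
      · have htopr := top (by omega)
        rcases Nat.lt_trichotomy m (J + 1 - p) with h1 | h1 | h1
        · omega
        · rw [h1] at hl
          have e : p + (J + 1 - p) = J + 1 := by omega
          rw [e] at hl
          exact lt_asymm' (hirrB b) (ltB_trans htr b) _ _ hl htopr
        · have hpe := pre (J + 1 - p) h1
          have e : p + (J + 1 - p) = J + 1 := by omega
          rw [e] at hpe
          rw [← hpe] at htopr
          exact hirrB b _ htopr
    · -- opposite orders: both roots are Lyndon, compare first and (p-1)-st letters
      obtain ⟨m0, hm0, pre0, hA⟩ := lyn (p - 1) (by omega) (by omega)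
      have hm00 : m0 = 0 := by omega
      subst hm00
      rw [Nat.add_zero] at hA
      obtain ⟨m1, hm1, pre1, hB⟩ := lyn' (p - 1) (by omega) (by omega)
      rcases Nat.eq_zero_or_pos m1 with h1 | h1
      · subst h1
        rw [Nat.add_zero] at hB
        have hB' := ltB_flip (Ne.symm hbb) _ _ hB
        exact lt_asymm' (hirrB b) (ltB_trans htr b) _ _ hA hB'
      · have hpe := pre1 0 h1
        rw [Nat.add_zero] at hpe
        rw [← hpe] at hA
        exact hirrB b _ hA

/-- Two runs with the same period and aligned root occurrences end at the same
height above the common node. -/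
theorem tops_le_aux {lt0 : α → α → Prop}
    (hirr : ∀ a : α, ¬ lt0 a a)
    (z : ℕ → α) (p J J' : ℕ) (b : Bool)
    (hp : 0 < p) (hJ : p ≤ J + 1)
    (perz' : ∀ i, i + p ≤ J' → z i = z (i + p))
    (top : J + 1 ≤ J' → ltB lt0 b (z (J + 1)) (z (J + 1 - p))) :
    ¬ (J < J') := by
  intro hlt
  have htopr := top (by omega)
  have hper := perz' (J + 1 - p) (by omega)
  have e : J + 1 - p + p = J + 1 := by omega
  rw [e] at hper
  rw [← hper] at htopr
  exact ltB_irr hirr b _ htopr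

end Stmt11Aux

namespace Stmt11Aux

open Function

variable {α : Type*}

theorem core {lt0 : α → α → Prop}
    (hirr : ∀ a : α, ¬ lt0 a a)
    (htr : ∀ a b c : α, lt0 a b → lt0 b c → lt0 a c)
    {T : Trie α} {v v' : Fin (T.n + 1)} {k k' : ℕ}
    (d : RunData lt0 T v k) (d' : RunData lt0 T v' k')
    (hx : (T.parent)^[d.t - 1] v = (T.parent)^[d'.t - 1] v') : v = v' ∧ k = k' := by
  obtain ⟨p, t, b, hp, h2p, ht1, htp, hnz, hper, htop, hlyn, hnochild⟩ := d
  obtain ⟨p', t', b', hp', h2p', ht1', htp', hnz', hper', htop', hlyn', hnochild'⟩ := d'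
  dsimp only at hx
  -- the common node `u` above the assigned node
  have ueq : (T.parent)^[t] v = (T.parent)^[t'] v' := by
    have e : t = (t - 1) + 1 := by omega
    have e' : t' = (t' - 1) + 1 := by omega
    rw [e, e', Function.iterate_succ_apply', Function.iterate_succ_apply', hx]
  set u : Fin (T.n + 1) := (T.parent)^[t] v with hu
  set z : ℕ → α := fun m => T.label ((T.parent)^[m] u) with hz
  have hNW : ∀ m, (T.parent)^[t + m] v = (T.parent)^[m] u := by
    intro m
    rw [Nat.add_comm t m, Function.iterate_add_apply, ← hu]
  have hNW' : ∀ m, (T.parent)^[t' + m] v' = (T.parent)^[m] u := by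
    intro m
    rw [Nat.add_comm t' m, Function.iterate_add_apply, ← ueq]
  -- heights above u
  set J : ℕ := k - t - 1 with hJdef
  set J' : ℕ := k' - t' - 1 with hJ'def
  have hkJ : k = t + (J + 1) := by omega
  have hkJ' : k' = t' + (J' + 1) := by omega
  have hJp : p ≤ J + 1 := by omega
  have hJp' : p' ≤ J' + 1 := by omega
  -- periods in `z` coordinates
  have perz : ∀ i, i + p ≤ J → z i = z (i + p) := by
    intro i hi
    have h1 := hper (t + i) (by omega)
    have e : t + i + p = t + (i + p) := by omega
    rw [e, hNW, hNW] at h1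
    exact h1
  have perz' : ∀ i, i + p' ≤ J' → z i = z (i + p') := by
    intro i hi
    have h1 := hper' (t' + i) (by omega)
    have e : t' + i + p' = t' + (i + p') := by omega
    rw [e, hNW', hNW'] at h1
    exact h1
  -- top conditions in `z` coordinates
  have topres : J + 1 ≤ J' → ltB lt0 b (z (J + 1)) (z (J + 1 - p)) := by
    intro hle
    rcases htop with h0 | h1
    · exfalso
      have e : k = t + (J + 1) := hkJ
      rw [e, hNW] at h0
      have e2 : (T.parent)^[J + 1] u = (T.parent)^[t' + (J + 1)] v' := (hNW' _).symm
      rw [e2] at h0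
      exact hnz' _ (by omega) h0
    · have e2 : k - p = t + (J + 1 - p) := by omega
      have e : k = t + (J + 1) := hkJ
      rw [e2, e, hNW, hNW] at h1
      exact h1
  have topres' : J' + 1 ≤ J → ltB lt0 b' (z (J' + 1)) (z (J' + 1 - p')) := by
    intro hle
    rcases htop' with h0 | h1
    · exfalso
      have e : k' = t' + (J' + 1) := hkJ'
      rw [e, hNW'] at h0
      have e2 : (T.parent)^[J' + 1] u = (T.parent)^[t + (J' + 1)] v := (hNW _).symm
      rw [e2] at h0
      exact hnz _ (by omega) h0
    · have e2 : k' - p' = t' + (J' + 1 - p') := by omega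
      have e : k' = t' + (J' + 1) := hkJ'
      rw [e2, e, hNW', hNW'] at h1
      exact h1
  -- Lyndon roots in `z` coordinates
  have lynz : IsLynF (ltB lt0 b) p z := by
    apply isLynF_congr p _ _ _ hlyn
    intro m hm
    simp only [hz]
    rw [hNW]
  have lynz' : IsLynF (ltB lt0 b') p' z := by
    apply isLynF_congr p' _ _ _ hlyn'
    intro m hm
    simp only [hz]
    rw [hNW']
  -- the label of the common assigned node is the last letter of both roots
  have hcz : T.label ((T.parent)^[t - 1] v) = z (p - 1) := by
    have h1 := hper (t - 1) (by omega)
    have e : t - 1 + p = t + (p - 1) := by omega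
    rw [e, hNW] at h1
    exact h1
  have hcz' : T.label ((T.parent)^[t' - 1] v') = z (p' - 1) := by
    have h1 := hper' (t' - 1) (by omega)
    have e : t' - 1 + p' = t' + (p' - 1) := by omega
    rw [e, hNW'] at h1
    exact h1
  have hc : z (p - 1) = z (p' - 1) := by
    rw [← hcz, hx, hcz']
  -- trichotomy on the periods
  rcases Nat.lt_trichotomy p p' with hpp | hpp | hpp
  · exact absurd (master hirr htr z p p' J J' b b' hp hpp hJp hJp'
      perz topres lynz lynz' hc) id
  · -- equal periods: the two runs coincide
    subst hpp
    -- equal tops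
    have hJJ : J = J' := by
      have h1 := tops_le_aux hirr z p J J' b hp hJp perz' topres
      have h2 := tops_le_aux hirr z p J' J b' hp hJp' perz topres'
      omega
    -- equal bottoms
    have below : ∀ dd, dd ≤ t → dd ≤ t' →
        (T.parent)^[t - dd] v = (T.parent)^[t' - dd] v' := by
      intro dd
      induction dd using Nat.strong_induction_on with
      | _ dd ih =>
        intro hdd hdd'
        rcases Nat.eq_zero_or_pos dd with h0 | h0
        · subst h0
          simp only [Nat.sub_zero]
          rw [← hu]
          exact ueq
        · obtain ⟨e, rfl⟩ : ∃ e, dd = e + 1 := ⟨dd - 1, by omega⟩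
          have hpa : T.parent ((T.parent)^[t - (e + 1)] v) = (T.parent)^[t - e] v := by
            have e1 : t - e = (t - (e + 1)) + 1 := by omega
            rw [e1, Function.iterate_succ_apply']
          have hpb : T.parent ((T.parent)^[t' - (e + 1)] v') = (T.parent)^[t' - e] v' := by
            have e1 : t' - e = (t' - (e + 1)) + 1 := by omega
            rw [e1, Function.iterate_succ_apply']
          have hanz : (T.parent)^[t - (e + 1)] v ≠ 0 := hnz _ (by omega)
          have hbnz : (T.parent)^[t' - (e + 1)] v' ≠ 0 := hnz' _ (by omega)
          have hlab : T.label ((T.parent)^[t - (e + 1)] v) =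
              T.label ((T.parent)^[t' - (e + 1)] v') := by
            have ha1 := hper (t - (e + 1)) (by omega)
            have hb1 := hper' (t' - (e + 1)) (by omega)
            rcases le_or_gt (e + 1) p with hc1 | hc1
            · have e2 : t - (e + 1) + p = t + (p - (e + 1)) := by omega
              have e3 : t' - (e + 1) + p = t' + (p - (e + 1)) := by omega
              rw [e2, hNW] at ha1
              rw [e3, hNW'] at hb1
              rw [ha1, hb1]
            · have e2 : t - (e + 1) + p = t - (e + 1 - p) := by omega
              have e3 : t' - (e + 1) + p = t' - (e + 1 - p) := by omega
              rw [e2] at ha1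
              rw [e3] at hb1
              rw [ha1, hb1, ih (e + 1 - p) (by omega) (by omega) (by omega)]
          have := T.labels_distinct _ _ hanz hbnz
            (by rw [hpa, hpb, ih e (by omega) (by omega) (by omega)]) hlab
          exact this
    -- equal occurrence positions
    have hnolt : ¬ (t < t') := by
      intro hlt
      obtain ⟨c, hc1, hc2⟩ : ∃ c, c = t' - t - 1 ∧ t' - t = c + 1 := ⟨t' - t - 1, rfl, by omega⟩
      have hveq : v = (T.parent)^[t' - t] v' := by
        have h1 := below t (le_refl t) (by omega)
        simpa using h1
      have hqnz : (T.parent)^[c] v' ≠ 0 := hnz' _ (by omega)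
      have hqpar : T.parent ((T.parent)^[c] v') = v := by
        rw [hveq, hc2, Function.iterate_succ_apply']
      have hqlab : T.label ((T.parent)^[c] v') =
          T.label ((T.parent)^[p - 1] v) := by
        have h1 := hper' c (by omega)
        rcases lt_or_ge t p with hcc | hcc
        · have e2 : c + p = t' + (p - t - 1) := by omega
          rw [e2, hNW'] at h1
          have e3 : p - 1 = t + (p - t - 1) := by omega
          rw [h1, e3, hNW]
        · -- t = p
          have e2 : c + p = t' - 1 := by omega
          rw [e2] at h1
          rw [h1, ← hx]
          have e3 : t - 1 = p - 1 := by omega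
          rw [e3]
      exact hnochild _ hqnz hqpar hqlab
    have hnolt' : ¬ (t' < t) := by
      intro hlt
      obtain ⟨c, hc1, hc2⟩ : ∃ c, c = t - t' - 1 ∧ t - t' = c + 1 := ⟨t - t' - 1, rfl, by omega⟩
      have hveq : v' = (T.parent)^[t - t'] v := by
        have h1 := below t' (by omega) (le_refl t')
        simpa using h1.symm
      have hqnz : (T.parent)^[c] v ≠ 0 := hnz _ (by omega)
      have hqpar : T.parent ((T.parent)^[c] v) = v' := by
        rw [hveq, hc2, Function.iterate_succ_apply']
      have hqlab : T.label ((T.parent)^[c] v) =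
          T.label ((T.parent)^[p - 1] v') := by
        have h1 := hper c (by omega)
        rcases lt_or_ge t' p with hcc | hcc
        · have e2 : c + p = t + (p - t' - 1) := by omega
          rw [e2, hNW] at h1
          have e3 : p - 1 = t' + (p - t' - 1) := by omega
          rw [h1, e3, hNW']
        · have e2 : c + p = t - 1 := by omega
          rw [e2] at h1
          rw [h1, hx]
          have e3 : t' - 1 = p - 1 := by omega
          rw [e3]
      exact hnochild' _ hqnz hqpar hqlab
    have htt : t = t' := by omega
    subst htt
    have hveq : v = v' := by
      have h1 := below t (le_refl t) (le_refl t)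
      simpa using h1
    exact ⟨hveq, by omega⟩
  · exact absurd (master hirr htr z p' p J' J b' b hp' hpp hJp' hJp
      perz' topres' lynz' lynz hc.symm) id

end Stmt11Aux

open Stmt11Aux in
/-- The number of runs in a trie with `n ≥ 1` edges is less than `n`. -/
theorem stmt11 {α : Type*} (T : Trie α) (hn : 0 < T.n) :
    Set.ncard {vk : Fin (T.n + 1) × ℕ | ∃ p, TrieRun T vk.1 vk.2 p} < T.n := by
  classical
  have hirr : ∀ a : α, ¬ WellOrderingRel a a := fun a => irrefl_of WellOrderingRel a
  have htr : ∀ a b c : α, WellOrderingRel a b → WellOrderingRel b c → WellOrderingRel a c :=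
    fun a b c h1 h2 => trans_of WellOrderingRel h1 h2
  have htot : ∀ a b : α, a ≠ b → WellOrderingRel a b ∨ WellOrderingRel b a := by
    intro a b hne
    rcases trichotomous_of WellOrderingRel a b with h | h | h
    · exact Or.inl h
    · exact absurd h hne
    · exact Or.inr h
  set S := {vk : Fin (T.n + 1) × ℕ | ∃ p, TrieRun T vk.1 vk.2 p} with hS
  set Tset := {u : Fin (T.n + 1) | u ≠ 0 ∧ T.parent u ≠ 0} with hTset
  let D : ∀ vk : Fin (T.n + 1) × ℕ, (∃ p, TrieRun T vk.1 vk.2 p) →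
      RunData WellOrderingRel T vk.1 vk.2 :=
    fun vk h => Classical.choice (exists_runData hirr htr htot h)
  set F : Fin (T.n + 1) × ℕ → Fin (T.n + 1) := fun vk =>
    if h : ∃ p, TrieRun T vk.1 vk.2 p then (T.parent)^[(D vk h).t - 1] vk.1 else 0 with hF
  have hmaps : ∀ vk ∈ S, F vk ∈ Tset := by
    intro vk hvk
    have h : ∃ p, TrieRun T vk.1 vk.2 p := hvk
    have hFv : F vk = (T.parent)^[(D vk h).t - 1] vk.1 := by
      rw [hF]; exact dif_pos h
    rw [hFv]
    have hb1 := (D vk h).ht1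
    have hb2 := (D vk h).htp
    have hb3 := (D vk h).h2p
    have hb4 := (D vk h).hp
    constructor
    · exact (D vk h).hnz _ (by omega)
    · have e1 : T.parent ((T.parent)^[(D vk h).t - 1] vk.1) =
          (T.parent)^[(D vk h).t] vk.1 := by
        have e : (D vk h).t = ((D vk h).t - 1) + 1 := by omega
        conv_rhs => rw [e, Function.iterate_succ_apply']
      rw [e1]
      exact (D vk h).hnz _ (by omega)
  have hinj : Set.InjOn F S := by
    intro a ha b hb hab
    have hA : ∃ p, TrieRun T a.1 a.2 p := ha
    have hB : ∃ p, TrieRun T b.1 b.2 p := hb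
    rw [hF] at hab
    simp only at hab
    rw [dif_pos hA, dif_pos hB] at hab
    obtain ⟨h1, h2⟩ := core hirr htr (D a hA) (D b hB) hab
    exact Prod.ext h1 h2
  have hle : S.ncard ≤ Tset.ncard :=
    Set.ncard_le_ncard_of_injOn F hmaps hinj (Set.toFinite _)
  have h1v : (1 : Fin (T.n + 1)).val = 1 := by
    simp [Fin.val_one']
    omega
  have h01 : (0 : Fin (T.n + 1)) ≠ 1 := by
    intro h
    have := congrArg Fin.val h
    rw [h1v] at this
    simp at this
  have hp1 : T.parent 1 = 0 := by
    have h1ne : (1 : Fin (T.n + 1)) ≠ 0 := Ne.symm h01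
    have hlt := T.parent_lt 1 h1ne
    have hv : (T.parent 1).val < (1 : Fin (T.n + 1)).val := hlt
    rw [h1v] at hv
    apply Fin.ext
    simpa using hv
  have hsub : Tset ⊆ ({0, 1} : Set (Fin (T.n + 1)))ᶜ := by
    intro w hw
    simp only [Set.mem_compl_iff, Set.mem_insert_iff, Set.mem_singleton_iff]
    push_neg
    refine ⟨hw.1, ?_⟩
    intro h
    exact hw.2 (by rw [h, hp1])
  have h2 : ({0, 1} : Set (Fin (T.n + 1))).ncard = 2 := Set.ncard_pair h01
  have h3 := Set.ncard_add_ncard_compl ({0, 1} : Set (Fin (T.n + 1)))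
  rw [h2, Nat.card_eq_fintype_card, Fintype.card_fin] at h3
  have h4 : Tset.ncard ≤ (({0, 1} : Set (Fin (T.n + 1)))ᶜ).ncard :=
    Set.ncard_le_ncard hsub (Set.toFinite _)
  omega
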